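/- Let V be a finite-dimensional complex inner product space with a ℤ/2-grading V = V⁰ ⊕ V¹, and let d, T : V → V be linear maps with d odd (mapping V⁰ to V¹ and V¹ to V⁰), T even, d² = 0, and Td = dT. Let Δ = (d + d*)². Then for every t > 0, Str(T e^{-tΔ}) = Str(T restricted to ker Δ), where Str(S) = Tr(S|_{V⁰}) − Tr(S|_{V¹}). -/

import Mathlib

open ContinuousLinearMap

section Helpers

variable {V : Type*} [NormedAddCommGroup V] [InnerProductSpace ℂ V] [FiniteDimensional ℂ V]

/-- Extensionality along an orthogonal decomposition. -/
lemma clm_ext_orth (K : Submodule ℂ V) {f g : V →L[ℂ] V}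
    (h0 : ∀ x ∈ K, f x = g x) (h1 : ∀ x ∈ Kᗮ, f x = g x) : f = g := by
  ext x
  obtain ⟨y, hy, z, hz, rfl⟩ := K.exists_add_mem_mem_orthogonal x
  simp [map_add, h0 y hy, h1 z hz]

noncomputable def clmTrace (S : V →L[ℂ] V) : ℂ :=
  LinearMap.trace ℂ V (S : V →ₗ[ℂ] V)

lemma clmTrace_mul_comm (A B : V →L[ℂ] V) : clmTrace (A * B) = clmTrace (B * A) := by
  have h : ∀ X Y : V →L[ℂ] V,
      ((X * Y : V →L[ℂ] V) : V →ₗ[ℂ] V) = (X : V →ₗ[ℂ] V) * (Y : V →ₗ[ℂ] V) := fun _ _ => rfl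
  unfold clmTrace
  rw [h, h, LinearMap.trace_mul_comm]

lemma clmTrace_add (A B : V →L[ℂ] V) : clmTrace (A + B) = clmTrace A + clmTrace B := by
  unfold clmTrace
  rw [ContinuousLinearMap.coe_add, map_add]

lemma clmTrace_neg (A : V →L[ℂ] V) : clmTrace (-A) = -clmTrace A := by
  unfold clmTrace
  rw [ContinuousLinearMap.coe_neg, map_neg]

lemma clmTrace_sub (A B : V →L[ℂ] V) : clmTrace (A - B) = clmTrace A - clmTrace B := by
  unfold clmTrace
  rw [ContinuousLinearMap.coe_sub, map_sub]

/-- Supertrace cyclicity: if `B` is odd (anticommutes with `ε`) then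
`Str(AB) = -Str(BA)`. -/
lemma clmTrace_cyc (ε A B : V →L[ℂ] V) (hB : B * ε = -(ε * B)) :
    clmTrace (ε * (A * B)) = -clmTrace (ε * (B * A)) := by
  calc clmTrace (ε * (A * B)) = clmTrace ((ε * A) * B) := by rw [mul_assoc]
    _ = clmTrace (B * (ε * A)) := clmTrace_mul_comm _ _
    _ = clmTrace ((B * ε) * A) := by rw [mul_assoc]
    _ = clmTrace ((-(ε * B)) * A) := by rw [hB]
    _ = clmTrace (-(ε * (B * A))) := by rw [neg_mul, mul_assoc]
    _ = -clmTrace (ε * (B * A)) := clmTrace_neg _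


end Helpers

/-- McKean–Singer-type statement: for an odd operator `d` with `d² = 0` and an
even operator `T` commuting with `d` on a finite-dimensional complex inner
product space with orthogonal `ℤ/2`-grading `V = V₀ ⊕ V₀ᗮ`, the supertrace
`Str(T e^{-tΔ})`, with `Δ = (d + d*)²`, equals the supertrace of `T` on
`ker Δ` (i.e. of `T` composed with the orthogonal projection onto `ker Δ`),
for every `t > 0`.  Here `Str(S) = Tr(ε ∘ S)` where `ε` is the grading
operator. -/
theorem mckean_singer_supertrace
    (V : Type*) [NormedAddCommGroup V] [InnerProductSpace ℂ V]
    [FiniteDimensional ℂ V]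
    (V₀ : Submodule ℂ V)
    (d T : V →L[ℂ] V)
    (hdodd₀ : ∀ x ∈ V₀, d x ∈ V₀ᗮ) (hdodd₁ : ∀ x ∈ V₀ᗮ, d x ∈ V₀)
    (hTeven₀ : ∀ x ∈ V₀, T x ∈ V₀) (hTeven₁ : ∀ x ∈ V₀ᗮ, T x ∈ V₀ᗮ)
    (hd2 : d ∘L d = 0) (hcomm : T ∘L d = d ∘L T)
    (ε : V →L[ℂ] V) (hε₀ : ∀ x ∈ V₀, ε x = x) (hε₁ : ∀ x ∈ V₀ᗮ, ε x = -x)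
    (Δ : V →L[ℂ] V) (hΔ : Δ = (d + ContinuousLinearMap.adjoint d) ∘L
      (d + ContinuousLinearMap.adjoint d))
    (K : Submodule ℂ V) (hK : K = LinearMap.ker (Δ : V →ₗ[ℂ] V))
    (t : ℝ) (ht : 0 < t) :
    LinearMap.trace ℂ V ((ε ∘L (T ∘L NormedSpace.exp ((-t) • Δ))) : V →ₗ[ℂ] V) =
      LinearMap.trace ℂ V
        ((ε ∘L (T ∘L (K.subtypeL ∘L K.orthogonalProjectionOnto))) : V →ₗ[ℂ] V) := by
  set a := ContinuousLinearMap.adjoint d with ha_def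
  -- basic multiplicative identities
  have hd2' : d * d = 0 := hd2
  have hcomm' : T * d = d * T := hcomm
  have haa : a * a = 0 := by
    have := congrArg ContinuousLinearMap.adjoint hd2
    rwa [ContinuousLinearMap.adjoint_comp, map_zero] at this
  have hΔab : Δ = d * a + a * d := by
    rw [hΔ]
    show (d + a) * (d + a) = d * a + a * d
    rw [add_mul, mul_add, mul_add, hd2', haa, zero_add, add_zero]
  -- adjoint is also odd
  have ha₀ : ∀ x ∈ V₀, a x ∈ V₀ᗮ := by
    intro x hx
    rw [Submodule.mem_orthogonal]
    intro u hu
    rw [ha_def, ContinuousLinearMap.adjoint_inner_right]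
    exact Submodule.inner_left_of_mem_orthogonal hx (hdodd₀ u hu)
  have ha₁ : ∀ x ∈ V₀ᗮ, a x ∈ V₀ := by
    intro x hx
    rw [← V₀.orthogonal_orthogonal, Submodule.mem_orthogonal]
    intro u hu
    rw [ha_def, ContinuousLinearMap.adjoint_inner_right]
    exact Submodule.inner_right_of_mem_orthogonal (hdodd₁ u hu) hx
  -- ε-commutation relations
  have hεd : ε * d = -(d * ε) := by
    refine clm_ext_orth V₀ ?_ ?_ <;> intro x hx <;>
      simp only [ContinuousLinearMap.mul_apply, ContinuousLinearMap.neg_apply]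
    · rw [hε₀ x hx, hε₁ _ (hdodd₀ x hx)]
    · rw [hε₁ x hx, hε₀ _ (hdodd₁ x hx), map_neg, neg_neg]
  have hεa : ε * a = -(a * ε) := by
    refine clm_ext_orth V₀ ?_ ?_ <;> intro x hx <;>
      simp only [ContinuousLinearMap.mul_apply, ContinuousLinearMap.neg_apply]
    · rw [hε₀ x hx, hε₁ _ (ha₀ x hx)]
    · rw [hε₁ x hx, hε₀ _ (ha₁ x hx), map_neg, neg_neg]
  have hεT : ε * T = T * ε := by
    refine clm_ext_orth V₀ ?_ ?_ <;> intro x hx <;>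
      simp only [ContinuousLinearMap.mul_apply]
    · rw [hε₀ x hx, hε₀ _ (hTeven₀ x hx)]
    · rw [hε₁ x hx, hε₁ _ (hTeven₁ x hx), map_neg]
  -- ε commutes with Δ
  have oddmul : ∀ x y : V →L[ℂ] V, ε * x = -(x * ε) → ε * y = -(y * ε) →
      ε * (x * y) = (x * y) * ε := by
    intro x y hx hy
    rw [← mul_assoc, hx, neg_mul, mul_assoc, hy, mul_neg, neg_neg, ← mul_assoc]
  have hεΔ : ε * Δ = Δ * ε := by
    rw [hΔab, mul_add, add_mul, oddmul d a hεd hεa, oddmul a d hεa hεd]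
  -- d and a commute with Δ
  have hdΔ : d * Δ = Δ * d := by
    rw [hΔab]
    have h1 : d * (d * a + a * d) = d * d * a + d * a * d := by noncomm_ring
    have h2 : (d * a + a * d) * d = d * a * d + a * (d * d) := by noncomm_ring
    rw [h1, h2, hd2', zero_mul, zero_add, mul_zero, add_zero]
  have haΔ : a * Δ = Δ * a := by
    rw [hΔab]
    have h1 : a * (d * a + a * d) = a * d * a + a * a * d := by noncomm_ring
    have h2 : (d * a + a * d) * a = d * (a * a) + a * d * a := by noncomm_ring
    rw [h1, h2, haa, zero_mul, add_zero, mul_zero, zero_add]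
  -- Δ is self-adjoint
  have hΔadj : ContinuousLinearMap.adjoint Δ = Δ := by
    rw [hΔ, ContinuousLinearMap.adjoint_comp, map_add, ← ha_def,
      ContinuousLinearMap.adjoint_adjoint]
    show (a + d) ∘L (a + d) = (d + a) ∘L (d + a)
    rw [add_comm a d]
  have hΔ0 : ∀ x ∈ K, Δ x = 0 := by
    intro x hx
    rw [hK] at hx
    exact hx
  -- the range of Δ is Kᗮ
  have hrange : LinearMap.range (Δ : V →ₗ[ℂ] V) = Kᗮ := by
    have hle : LinearMap.range (Δ : V →ₗ[ℂ] V) ≤ Kᗮ := by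
      rintro _ ⟨x, rfl⟩
      rw [Submodule.mem_orthogonal]
      intro u hu
      show (inner ℂ u (Δ x) : ℂ) = 0
      rw [← hΔadj, ContinuousLinearMap.adjoint_inner_right, hΔ0 u hu, inner_zero_left]
    refine Submodule.eq_of_le_of_finrank_eq hle ?_
    have h1 := LinearMap.finrank_range_add_finrank_ker (Δ : V →ₗ[ℂ] V)
    have h2 := Submodule.finrank_add_finrank_orthogonal K
    rw [← hK] at h1
    omega
  have hΔmem : ∀ x, Δ x ∈ Kᗮ := fun x => hrange ▸ LinearMap.mem_range_self _ x
  have hKW0 : ∀ x, x ∈ K → x ∈ Kᗮ → x = 0 := by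
    intro x h1 h2
    simpa using K.orthogonal_disjoint.le_bot ⟨h1, h2⟩
  -- preservation of K and Kᗮ for operators commuting with Δ
  have hpresK : ∀ A : V →L[ℂ] V, A * Δ = Δ * A → ∀ x ∈ K, A x ∈ K := by
    intro A hA x hx
    rw [hK, LinearMap.mem_ker]
    show Δ (A x) = 0
    have := congrArg (fun S : V →L[ℂ] V => S x) hA
    simp only [ContinuousLinearMap.mul_apply] at this
    rw [← this, hΔ0 x hx, map_zero]
  have hpresW : ∀ A : V →L[ℂ] V, A * Δ = Δ * A → ∀ x ∈ Kᗮ, A x ∈ Kᗮ := by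
    intro A hA x hx
    rw [← hrange] at hx ⊢
    obtain ⟨y, rfl⟩ := hx
    refine ⟨A y, ?_⟩
    have := congrArg (fun S : V →L[ℂ] V => S y) hA
    exact (by simpa only [ContinuousLinearMap.mul_apply] using this.symm : Δ (A y) = A (Δ y))
  -- the exponential
  set F := NormedSpace.exp ((-t) • Δ) with hF_def
  have hFcomm : ∀ A : V →L[ℂ] V, A * Δ = Δ * A → A * F = F * A := by
    intro A hA
    exact ((Commute.smul_right (hA : Commute A Δ) (-t)).exp_right)
  have hFΔ : F * Δ = Δ * F := (hFcomm Δ rfl).symm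
  have hF1 : ∀ x, Δ x = 0 → F x = x := by
    intro x hx
    have hAx : ∀ n : ℕ, n ≠ 0 → (((-t) • Δ) ^ n) x = 0 := by
      intro n hn
      obtain ⟨m, rfl⟩ := Nat.exists_eq_succ_of_ne_zero hn
      rw [pow_succ, ContinuousLinearMap.mul_apply]
      have : ((-t) • Δ) x = 0 := by
        rw [ContinuousLinearMap.smul_apply, hx, smul_zero]
      rw [this, map_zero]
    rw [hF_def, NormedSpace.exp_eq_tsum ℂ]
    have hsum := NormedSpace.expSeries_summable' (𝕂 := ℂ) ((-t) • Δ)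
    have happ := ((ContinuousLinearMap.apply ℂ V x).map_tsum hsum)
    simp only [ContinuousLinearMap.apply_apply] at happ
    rw [happ]
    rw [tsum_eq_single 0 ?_]
    · simp
    · intro n hn
      rw [ContinuousLinearMap.smul_apply, hAx n hn, smul_zero]
  have hFK : ∀ x ∈ K, F x = x := fun x hx => hF1 x (hΔ0 x hx)
  -- the projection onto K
  set P := K.subtypeL ∘L K.orthogonalProjectionOnto with hP_def
  have hPK : ∀ x ∈ K, P x = x := by
    intro x hx
    show (K.orthogonalProjectionOnto x : V) = x
    exact Submodule.starProjection_eq_self_iff.mpr hx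
  have hPW : ∀ x ∈ Kᗮ, P x = 0 := by
    intro x hx
    show (K.orthogonalProjectionOnto x : V) = 0
    rw [Submodule.orthogonalProjectionOnto_apply_of_mem_orthogonal hx,
      Submodule.coe_zero]
  have hPcomm : ∀ A : V →L[ℂ] V, (∀ x ∈ K, A x ∈ K) → (∀ x ∈ Kᗮ, A x ∈ Kᗮ) →
      A * P = P * A := by
    intro A h1 h2
    refine clm_ext_orth K ?_ ?_ <;> intro x hx <;>
      simp only [ContinuousLinearMap.mul_apply]
    · rw [hPK x hx, hPK _ (h1 x hx)]
    · rw [hPW x hx, hPW _ (h2 x hx), map_zero]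
  -- the pseudoinverse of Δ
  have hΔW' : ∀ x ∈ Kᗮ, Δ x ∈ Kᗮ := fun x _ => hΔmem x
  set δ : Kᗮ →ₗ[ℂ] Kᗮ := LinearMap.restrict (Δ : V →ₗ[ℂ] V) hΔW' with hδ_def
  have hδapp : ∀ u : Kᗮ, (δ u : V) = Δ u := fun u => rfl
  have hδinj : Function.Injective δ := by
    rw [← LinearMap.ker_eq_bot]
    rw [Submodule.eq_bot_iff]
    intro u hu
    rw [LinearMap.mem_ker] at hu
    have h1 : Δ (u : V) = 0 := congrArg Subtype.val hu
    have h2 : (u : V) ∈ LinearMap.ker (Δ : V →ₗ[ℂ] V) := h1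
    rw [← hK] at h2
    exact Subtype.ext (hKW0 _ h2 u.2)
  have hδsurj : Function.Surjective δ := LinearMap.injective_iff_surjective.mp hδinj
  set e := LinearEquiv.ofBijective δ ⟨hδinj, hδsurj⟩ with he_def
  set Q : V →L[ℂ] V := Kᗮ.subtypeL ∘L
    (LinearMap.toContinuousLinearMap (e.symm : Kᗮ →ₗ[ℂ] Kᗮ) ∘L
      Kᗮ.orthogonalProjectionOnto) with hQ_def
  have hQapp : ∀ x, Q x = (e.symm (Kᗮ.orthogonalProjectionOnto x) : V) := by
    intro x
    simp [hQ_def]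
  have hQK : ∀ x ∈ K, Q x = 0 := by
    intro x hx
    rw [hQapp]
    have : Kᗮ.orthogonalProjectionOnto x = 0 :=
      Submodule.orthogonalProjectionOnto_apply_of_mem_orthogonal
        (K.le_orthogonal_orthogonal hx)
    rw [this, map_zero, Submodule.coe_zero]
  have hQΔ : ∀ v ∈ Kᗮ, Q (Δ v) = v := by
    intro v hv
    rw [hQapp]
    have h1 : Kᗮ.orthogonalProjectionOnto (Δ v) = ⟨Δ v, hΔmem v⟩ :=
      Submodule.orthogonalProjectionOnto_mem_subspace_eq_self (⟨Δ v, hΔmem v⟩ : Kᗮ)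
    rw [h1]
    have h2 : e ⟨v, hv⟩ = ⟨Δ v, hΔmem v⟩ := Subtype.ext rfl
    rw [← h2, LinearEquiv.symm_apply_apply]
  have hΔQ : ∀ w ∈ Kᗮ, Δ (Q w) = w ∧ Q w ∈ Kᗮ := by
    intro w hw
    obtain ⟨v, hv⟩ := hδsurj ⟨w, hw⟩
    have hvw : Δ (v : V) = w := by rw [← hδapp v, hv]
    have hQw : Q w = (v : V) := by rw [← hvw, hQΔ _ v.2]
    rw [hQw, hvw]
    exact ⟨rfl, v.2⟩
  have hQcomm : ∀ A : V →L[ℂ] V, A * Δ = Δ * A → A * Q = Q * A := by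
    intro A hA
    have hAK := hpresK A hA
    have hAW := hpresW A hA
    have hApt : ∀ x, A (Δ x) = Δ (A x) := by
      intro x
      have := congrArg (fun S : V →L[ℂ] V => S x) hA
      simpa only [ContinuousLinearMap.mul_apply] using this
    refine clm_ext_orth K ?_ ?_ <;> intro x hx <;>
      simp only [ContinuousLinearMap.mul_apply]
    · rw [hQK x hx, map_zero, hQK _ (hAK x hx)]
    · obtain ⟨h1, h2⟩ := hΔQ x hx
      conv_rhs => rw [← h1]
      rw [hApt, hQΔ _ (hAW _ h2)]
  -- `R := F - P` vanishes on `K` and maps into `Kᗮ`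
  set R := F - P with hR_def
  have hRW : ∀ x, R x ∈ Kᗮ := by
    intro x
    obtain ⟨y, hy, z, hz, rfl⟩ := K.exists_add_mem_mem_orthogonal x
    have h1 : R y = 0 := by
      simp only [hR_def, ContinuousLinearMap.sub_apply]
      rw [hFK y hy, hPK y hy, sub_self]
    have h2 : R z ∈ Kᗮ := by
      simp only [hR_def, ContinuousLinearMap.sub_apply]
      rw [hPW z hz, sub_zero]
      exact hpresW F hFΔ z hz
    rw [map_add, h1, zero_add]
    exact h2
  set g := Q * R with hg_def
  have hFPg : F - P = Δ * g := by
    ext x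
    simp only [hg_def, ContinuousLinearMap.mul_apply]
    exact ((hΔQ (R x) (hRW x)).1).symm
  -- commutation of `g` with `d` and `ε`
  have hcomR : ∀ A : V →L[ℂ] V, A * Δ = Δ * A → A * R = R * A := by
    intro A hA
    rw [hR_def, mul_sub, sub_mul, hFcomm A hA,
      hPcomm A (hpresK A hA) (hpresW A hA)]
  have hdR := hcomR d hdΔ
  have hεR := hcomR ε hεΔ
  have hdQ := hQcomm d hdΔ
  have hεQ := hQcomm ε hεΔ
  have hgd : g * d = d * g := by
    rw [hg_def, mul_assoc, ← hdR, ← mul_assoc, ← hdQ, mul_assoc]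
  have hgε : g * ε = ε * g := by
    rw [hg_def, mul_assoc, ← hεR, ← mul_assoc, ← hεQ, mul_assoc]
  -- the supertrace of `ε T (d a g)` cancels that of `ε T (a d g)`
  have haε : a * ε = -(ε * a) := by rw [hεa, neg_neg]
  have hBε : (T * (a * g)) * ε = -(ε * (T * (a * g))) := by
    calc (T * (a * g)) * ε = T * (a * (g * ε)) := by rw [mul_assoc, mul_assoc]
      _ = T * ((a * ε) * g) := by rw [hgε, ← mul_assoc a ε g]
      _ = -(T * (ε * (a * g))) := by rw [haε, neg_mul, mul_neg, mul_assoc]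
      _ = -((T * ε) * (a * g)) := by rw [mul_assoc]
      _ = -(ε * (T * (a * g))) := by rw [← hεT, mul_assoc]
  have term1 : clmTrace (ε * (T * (d * (a * g)))) =
      -clmTrace (ε * (T * (a * (d * g)))) := by
    have e2 : T * (d * (a * g)) = d * (T * (a * g)) := by
      rw [← mul_assoc, hcomm', mul_assoc]
    have e4 : (T * (a * g)) * d = T * (a * (d * g)) := by
      rw [mul_assoc, mul_assoc, hgd]
    rw [e2, clmTrace_cyc ε d (T * (a * g)) hBε, e4]
  -- assemble
  have hFsum : F = P + (d * (a * g) + a * (d * g)) := by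
    have h5 : Δ * g = d * (a * g) + a * (d * g) := by
      rw [hΔab, add_mul, mul_assoc, mul_assoc]
    rw [← h5, ← hFPg]
    abel
  show clmTrace (ε * (T * F)) = clmTrace (ε * (T * P))
  have hsplit : ε * (T * F) =
      ε * (T * P) + (ε * (T * (d * (a * g))) + ε * (T * (a * (d * g)))) := by
    rw [hFsum, mul_add, mul_add, mul_add, mul_add]
  rw [hsplit, clmTrace_add, clmTrace_add, term1]
  ring
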